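/- Let α ∈ ℕ and n ≥ 1. Define T_n^α(x) = -((α+2)_{n-1}/n!)·x·L_{n-1}^{α+2}(x) and the second-order Laguerre operator L_{2}^α y = x y'' + (α+1−x) y'. Then (α+2)!·(L_2^α + n) T_n^α(x) = -(n+1)_α (α+1)(α+2) L_{n-1}^{α+2}(x). -/

import Mathlib

open Real Finset

noncomputable def laguerre (n : ℕ) (γ : ℝ) : ℝ → ℝ := fun x =>
  ∑ k ∈ Finset.range (n + 1),
    (-1 : ℝ) ^ k * (ascPochhammer ℝ (n - k)).eval (γ + (k : ℝ) + 1)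
      / ((n - k).factorial * k.factorial) * x ^ k

noncomputable def lagOp (γ : ℝ) (y : ℝ → ℝ) : ℝ → ℝ := fun x =>
  x * deriv (deriv y) x + (γ + 1 - x) * deriv y x

noncomputable def Tpoly (n : ℕ) (α : ℕ) : ℝ → ℝ := fun x =>
  -((ascPochhammer ℝ (n - 1)).eval ((α : ℝ) + 2) / n.factorial) * x * laguerre (n - 1) ((α : ℝ) + 2) x

noncomputable def lagCoeff (m : ℕ) (γ : ℝ) (k : ℕ) : ℝ :=
  (-1 : ℝ) ^ k * (ascPochhammer ℝ (m - k)).eval (γ + (k : ℝ) + 1)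
    / ((m - k).factorial * k.factorial)

noncomputable def lagPoly (m : ℕ) (γ : ℝ) : Polynomial ℝ :=
  ∑ k ∈ Finset.range (m + 1), Polynomial.C (lagCoeff m γ k) * Polynomial.X ^ k

lemma laguerre_eq_eval (m : ℕ) (γ : ℝ) (x : ℝ) :
    laguerre m γ x = (lagPoly m γ).eval x := by
  simp [laguerre, lagPoly, lagCoeff, Polynomial.eval_finset_sum]

lemma lagPoly_coeff (m : ℕ) (γ : ℝ) (j : ℕ) :
    (lagPoly m γ).coeff j = if j ≤ m then lagCoeff m γ j else 0 := by
  rw [lagPoly, Polynomial.finset_sum_coeff]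
  simp only [Polynomial.coeff_C_mul, Polynomial.coeff_X_pow, mul_ite, mul_one, mul_zero]
  rw [Finset.sum_ite_eq (Finset.range (m + 1)) j]
  simp [Nat.lt_succ_iff]

lemma lagCoeff_rec (m : ℕ) (γ : ℝ) (k : ℕ) (hk : k < m) :
    ((k : ℝ) + 1) * (γ + (k : ℝ) + 1) * lagCoeff m γ (k + 1)
      + ((m : ℝ) - (k : ℝ)) * lagCoeff m γ k = 0 := by
  obtain ⟨t, ht⟩ : ∃ t, m - k = t + 1 := ⟨m - k - 1, by omega⟩
  have h1 : m - (k + 1) = t := by omega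
  have h2 : (m : ℝ) - (k : ℝ) = (t : ℝ) + 1 := by
    have : m = k + t + 1 := by omega
    subst this; push_cast; ring
  have hE : (ascPochhammer ℝ (m - k)).eval (γ + (k : ℝ) + 1)
      = (γ + (k : ℝ) + 1) * (ascPochhammer ℝ t).eval (γ + (k : ℝ) + 1 + 1) := by
    rw [ht, ascPochhammer_succ_left]
    simp [Polynomial.eval_comp]
  rw [lagCoeff, lagCoeff, hE, ht, h1, h2]
  have hfk : ((k.factorial : ℝ)) ≠ 0 := by positivity
  have hft : ((t.factorial : ℝ)) ≠ 0 := by positivity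
  push_cast [Nat.factorial_succ]
  field_simp
  ring

lemma lag_ode (m : ℕ) (γ : ℝ) :
    Polynomial.X * (Polynomial.derivative (Polynomial.derivative (lagPoly m γ)))
      + (Polynomial.C (γ + 1) - Polynomial.X) * Polynomial.derivative (lagPoly m γ)
      + Polynomial.C (m : ℝ) * lagPoly m γ = 0 := by
  ext j
  simp only [Polynomial.coeff_add, Polynomial.coeff_zero, sub_mul, Polynomial.coeff_sub,
    Polynomial.coeff_C_mul]
  rcases j with _ | j
  · simp only [Polynomial.mul_coeff_zero, Polynomial.coeff_X_zero, zero_mul,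
      Polynomial.coeff_derivative, lagPoly_coeff]
    rcases Nat.eq_zero_or_pos m with hm | hm
    · subst hm; simp
    · have h0 : (0 : ℕ) ≤ m := Nat.zero_le m
      have h1 : (1 : ℕ) ≤ m := hm
      simp only [h0, h1, if_pos]
      have := lagCoeff_rec m γ 0 hm
      push_cast at this ⊢
      linarith [this]
  · rw [Polynomial.coeff_X_mul, Polynomial.coeff_X_mul]
    simp only [Polynomial.coeff_derivative, lagPoly_coeff]
    rcases lt_trichotomy (j + 1) m with h | h | h
    · have h2 : j + 2 ≤ m := by omega
      have h1 : j + 1 ≤ m := by omega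
      simp only [h1, h2, if_pos]
      have := lagCoeff_rec m γ (j + 1) h
      push_cast at this ⊢
      nlinarith [this]
    · have h1 : j + 1 ≤ m := by omega
      have h2 : ¬ (j + 2 ≤ m) := by omega
      simp only [h1, if_pos, h2, if_neg]
      have : (m : ℝ) = (j : ℝ) + 1 := by rw [← h]; push_cast; ring
      rw [this]; push_cast; ring
    · have h1 : ¬ (j + 1 ≤ m) := by omega
      have h2 : ¬ (j + 2 ≤ m) := by omega
      simp [h1, h2]

lemma lag_ode_eval (m : ℕ) (γ : ℝ) (x : ℝ) :
    x * (Polynomial.derivative (Polynomial.derivative (lagPoly m γ))).eval x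
      + (γ + 1 - x) * (Polynomial.derivative (lagPoly m γ)).eval x
      + (m : ℝ) * (lagPoly m γ).eval x = 0 := by
  have := congrArg (Polynomial.eval x) (lag_ode m γ)
  simpa using this

lemma fact_identity (α m : ℕ) :
    ((α + 2).factorial : ℝ) * (ascPochhammer ℝ m).eval ((α : ℝ) + 2) * ((α : ℝ) + 1)
      = ((m + 1).factorial : ℝ) * (ascPochhammer ℝ α).eval ((m : ℝ) + 2) * ((α : ℝ) + 1) * ((α : ℝ) + 2) := by
  have h1 : (α + 1).factorial * (α + 2).ascFactorial m = (m + 1).factorial * (m + 2).ascFactorial α := by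
    rw [Nat.factorial_mul_ascFactorial (α + 1) m, Nat.factorial_mul_ascFactorial (m + 1) α]
    ring_nf
  have e1 : (ascPochhammer ℝ m).eval ((α : ℝ) + 2) = ((α + 2).ascFactorial m : ℝ) := by
    rw [show ((α : ℝ) + 2) = ((α + 2 : ℕ) : ℝ) by push_cast; ring,
      ← ascPochhammer_eval_cast, ascPochhammer_nat_eq_ascFactorial]
  have e2 : (ascPochhammer ℝ α).eval ((m : ℝ) + 2) = ((m + 2).ascFactorial α : ℝ) := by
    rw [show ((m : ℝ) + 2) = ((m + 2 : ℕ) : ℝ) by push_cast; ring,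
      ← ascPochhammer_eval_cast, ascPochhammer_nat_eq_ascFactorial]
  have h2 : ((α + 2).factorial : ℝ) = ((α + 1).factorial : ℝ) * ((α : ℝ) + 2) := by
    rw [show α + 2 = (α + 1) + 1 from rfl, Nat.factorial_succ]; push_cast; ring
  rw [e1, e2, h2]
  have h3 := congrArg (fun t : ℕ => (t : ℝ)) h1
  push_cast at h3
  linear_combination (((α : ℝ) + 1) * ((α : ℝ) + 2)) * h3

theorem laguerre_type_first_identity (α : ℕ) (n : ℕ) (hn : 1 ≤ n) (x : ℝ) :
    ((α + 2).factorial : ℝ) * (lagOp (α : ℝ) (Tpoly n α) x + (n : ℝ) * Tpoly n α x)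
      = -((ascPochhammer ℝ α).eval ((n : ℝ) + 1)) * ((α : ℝ) + 1) * ((α : ℝ) + 2)
          * laguerre (n - 1) ((α : ℝ) + 2) x := by
  obtain ⟨m, rfl⟩ : ∃ m, n = m + 1 := ⟨n - 1, by omega⟩
  have hm1 : m + 1 - 1 = m := rfl
  have hT : Tpoly (m + 1) α = fun y =>
      (Polynomial.C (-((ascPochhammer ℝ m).eval ((α : ℝ) + 2) / ((m + 1).factorial : ℝ)))
        * (Polynomial.X * lagPoly m ((α : ℝ) + 2))).eval y := by
    funext y
    simp only [Tpoly, hm1, laguerre_eq_eval, Polynomial.eval_mul, Polynomial.eval_C,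
      Polynomial.eval_X]
    ring_nf
  have hd1 : deriv (Tpoly (m + 1) α)
      = fun y => (Polynomial.derivative
          (Polynomial.C (-((ascPochhammer ℝ m).eval ((α : ℝ) + 2) / ((m + 1).factorial : ℝ)))
            * (Polynomial.X * lagPoly m ((α : ℝ) + 2)))).eval y := by
    funext y
    rw [hT]
    exact Polynomial.deriv _
  have hd2 : deriv (deriv (Tpoly (m + 1) α))
      = fun y => (Polynomial.derivative (Polynomial.derivative
          (Polynomial.C (-((ascPochhammer ℝ m).eval ((α : ℝ) + 2) / ((m + 1).factorial : ℝ)))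
            * (Polynomial.X * lagPoly m ((α : ℝ) + 2))))).eval y := by
    funext y
    rw [hd1]
    exact Polynomial.deriv _
  have hD : ∀ a : ℝ, Polynomial.derivative (Polynomial.C a * (Polynomial.X * lagPoly m ((α : ℝ) + 2)))
      = Polynomial.C a * (lagPoly m ((α : ℝ) + 2)
          + Polynomial.X * Polynomial.derivative (lagPoly m ((α : ℝ) + 2))) := by
    intro a
    rw [Polynomial.derivative_C_mul, Polynomial.derivative_mul, Polynomial.derivative_X, one_mul]
  have hDD : ∀ a : ℝ, Polynomial.derivative (Polynomial.derivative
        (Polynomial.C a * (Polynomial.X * lagPoly m ((α : ℝ) + 2))))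
      = Polynomial.C a * (2 * Polynomial.derivative (lagPoly m ((α : ℝ) + 2))
          + Polynomial.X * Polynomial.derivative (Polynomial.derivative (lagPoly m ((α : ℝ) + 2)))) := by
    intro a
    rw [hD, Polynomial.derivative_C_mul, Polynomial.derivative_add, Polynomial.derivative_mul,
      Polynomial.derivative_X, one_mul]
    ring_nf
  have hode := lag_ode_eval m ((α : ℝ) + 2) x
  have hfact : ((α + 2).factorial : ℝ)
        * ((ascPochhammer ℝ m).eval ((α : ℝ) + 2) / ((m + 1).factorial : ℝ)) * ((α : ℝ) + 1)
      = (ascPochhammer ℝ α).eval ((m : ℝ) + 2) * ((α : ℝ) + 1) * ((α : ℝ) + 2) := by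
    have h := fact_identity α m
    have hne : (((m + 1).factorial : ℝ)) ≠ 0 := by positivity
    field_simp
    have hα : (α : ℝ) + 1 ≠ 0 := by positivity
    apply mul_right_cancel₀ hα
    linear_combination h
  have hpt : (((m + 1 : ℕ) : ℝ)) + 1 = (m : ℝ) + 2 := by push_cast; ring
  simp only [lagOp]
  rw [hd2, hd1]
  beta_reduce
  rw [hDD, hD]
  simp only [hT, hm1, laguerre_eq_eval, hpt]
  simp only [Polynomial.eval_mul, Polynomial.eval_add, Polynomial.eval_C, Polynomial.eval_X,
    Polynomial.eval_ofNat]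
  push_cast
  linear_combination
    (-(((α + 2).factorial : ℝ)) * ((ascPochhammer ℝ m).eval ((α : ℝ) + 2) / ((m + 1).factorial : ℝ)) * x) * hode
      - (((lagPoly m ((α : ℝ) + 2)).eval x)) * hfact
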